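/- arXiv:math/9903092 — 3 statements merged into one kernel-verified Lean document; each statement's English description precedes it below -/
import Mathlib

section
/- Let F be a field of characteristic 2, let u ∈ F((x⁻¹)), and let Q, R, S, T ∈ F[x] satisfy S·u² + T ≠ 0 and u = (Q·u² + R)/(S·u² + T). Then for every c ∈ F(x) with S·c² + T ≠ 0, one has u − (Q·c² + R)/(S·c² + T) = (Q·T − R·S)·(u − c)² / ((S·u² + T)·(S·c² + T)). -/
open Polynomial
open scoped Classical

noncomputable section

namespace PaperCF

/-- The element `x` of `F((x⁻¹))`, realized as the Hahn series `T⁻¹` where `T` is the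
Hahn-series variable (so a series in `x⁻¹` has well-ordered support in `T`). -/
def xx (F : Type*) [Field F] : LaurentSeries F := HahnSeries.single (-1 : ℤ) 1

/-- Embedding of the polynomial ring `F[x]` into `F((x⁻¹))`, `x ↦ xx`. -/
def polyEmb (F : Type*) [Field F] : Polynomial F →+* LaurentSeries F :=
  (Polynomial.aeval (xx F)).toRingHom

/-- The degree of a Laurent series in `x⁻¹` (largest exponent of `x` with nonzero
coefficient), with `deg 0 = ⊥`. -/
def degB (F : Type*) [Field F] (u : LaurentSeries F) : WithBot ℤ :=
  if u = 0 then ⊥ else (-u.order : ℤ)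

/-- The non-archimedean absolute value `|u| = q ^ deg u` (and `|0| = 0`). -/
def absVal (F : Type*) [Field F] (q : ℝ) (u : LaurentSeries F) : ℝ :=
  if u = 0 then 0 else q ^ (-u.order)

/-- `u` is irrational: it is not a ratio of two polynomials in `x`. -/
def IsIrrational (F : Type*) [Field F] (u : LaurentSeries F) : Prop :=
  ∀ a b : Polynomial F, b ≠ 0 → u * polyEmb F b ≠ polyEmb F a

/-- The (necessarily unique, non-terminating) continued fraction expansion of `u`:
`p i` are the partial quotients, `U i` the complete quotients.  The condition
`0 < (U i - p i).order` says exactly that `p i` is the integral part of `U i`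
(the difference has only negative powers of `x`). -/
structure CFExpansion (F : Type*) [Field F] (u : LaurentSeries F) where
  p : ℕ → Polynomial F
  U : ℕ → LaurentSeries F
  U_zero : U 0 = u
  ne : ∀ i, U i ≠ polyEmb F (p i)
  intPart : ∀ i, 0 < (U i - polyEmb F (p i)).order
  step : ∀ i, U (i + 1) = (U i - polyEmb F (p i))⁻¹

/-- Numerators `aₙ` of the convergents: `aₙ = pₙ aₙ₋₁ + aₙ₋₂`. -/
def convNum {F : Type*} [Field F] (p : ℕ → Polynomial F) : ℕ → Polynomial F
  | 0 => p 0
  | 1 => p 1 * p 0 + 1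
  | (n + 2) => p (n + 2) * convNum p (n + 1) + convNum p n

/-- Denominators `bₙ` of the convergents: `bₙ = pₙ bₙ₋₁ + bₙ₋₂`. -/
def convDen {F : Type*} [Field F] (p : ℕ → Polynomial F) : ℕ → Polynomial F
  | 0 => 1
  | 1 => p 1
  | (n + 2) => p (n + 2) * convDen p (n + 1) + convDen p n

/-- The `n`-th convergent `cₙ = aₙ/bₙ = [p₀; p₁, …, pₙ]`. -/
def conv (F : Type*) [Field F] (p : ℕ → Polynomial F) (n : ℕ) : LaurentSeries F :=
  polyEmb F (convNum p n) / polyEmb F (convDen p n)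

/-- `u` has bounded partial quotients. -/
def HasBoundedPQ (F : Type*) [Field F] (u : LaurentSeries F) : Prop :=
  ∃ cf : CFExpansion F u, ∃ N : ℕ, ∀ i, (cf.p i).natDegree ≤ N

/-- The integral part `⌊u⌋ ∈ F[x]`: the sum of the terms of `u` of nonnegative degree. -/
def intPart (F : Type*) [Field F] (u : LaurentSeries F) : Polynomial F :=
  ∑ n ∈ Finset.Icc (0 : ℤ) (-u.order), Polynomial.monomial n.toNat (u.coeff (-n))

/-- The sequence of complete quotients produced by the continued fraction algorithm
(with junk value `0⁻¹ = 0` after termination). -/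
def cqSeq (F : Type*) [Field F] (u : LaurentSeries F) : ℕ → LaurentSeries F
  | 0 => u
  | n + 1 => (cqSeq F u n - polyEmb F (intPart F (cqSeq F u n)))⁻¹


/-- the algebraic identity
`u - (Qc²+R)/(Sc²+T) = (QT-RS)(u-c)²/((Su²+T)(Sc²+T))` for rational `c`, in
characteristic 2. -/
theorem statement2 (F : Type*) [Field F] [CharP F 2] (u : LaurentSeries F)
    (Q R S T : Polynomial F)
    (hden : polyEmb F S * u ^ 2 + polyEmb F T ≠ 0)
    (heq : u = (polyEmb F Q * u ^ 2 + polyEmb F R) / (polyEmb F S * u ^ 2 + polyEmb F T)) :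
    ∀ a b : Polynomial F, b ≠ 0 →
      ∀ c : LaurentSeries F, c = polyEmb F a / polyEmb F b →
        polyEmb F S * c ^ 2 + polyEmb F T ≠ 0 →
        u - (polyEmb F Q * c ^ 2 + polyEmb F R) / (polyEmb F S * c ^ 2 + polyEmb F T)
          = polyEmb F (Q * T - R * S) * (u - c) ^ 2 /
            ((polyEmb F S * u ^ 2 + polyEmb F T) * (polyEmb F S * c ^ 2 + polyEmb F T)) := by
  intro a b hb c hc hcden
  have h2 : (2 : LaurentSeries F) = 0 := by
    have h := map_ofNat (algebraMap F (LaurentSeries F)) 2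
    rw [← h, show ((OfNat.ofNat 2 : F)) = 0 from CharTwo.two_eq_zero, map_zero]
  have key := heq
  rw [eq_div_iff hden] at key
  rw [map_sub (polyEmb F), map_mul (polyEmb F), map_mul (polyEmb F)]
  have hden' : u ^ 2 * polyEmb F S + polyEmb F T ≠ 0 := by rwa [mul_comm]
  have hcden' : c ^ 2 * polyEmb F S + polyEmb F T ≠ 0 := by rwa [mul_comm]
  field_simp
  linear_combination (polyEmb F S * c ^ 2 + polyEmb F T) * key +
    (c ^ 2 - u * c) *
      (polyEmb F R * polyEmb F S - polyEmb F Q * polyEmb F T) * h2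

end PaperCF
end
end

section
/- Let F be a field, let u ∈ F((x⁻¹)) be irrational, and let a, b ∈ F[x] be coprime with b ≠ 0. If |u − a/b| = |x|^(−k)·|b|^(−2) for some positive integer k, then there is an index n ≥ 0 such that a/b equals the n-th convergent cₙ of u and k = deg pₙ₊₁. -/
open Polynomial
open scoped Classical

noncomputable section

namespace PaperCF

section Helpers

variable {F : Type*} [Field F]


/-- coefficient extraction as additive hom -/
def coeffHom (g : ℤ) : LaurentSeries F →+ F where
  toFun x := x.coeff g
  map_zero' := rfl
  map_add' _ _ := HahnSeries.coeff_add

lemma order_inv (u : LaurentSeries F) (hu : u ≠ 0) : (u⁻¹).order = -u.order := by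
  have h2 := HahnSeries.order_mul hu (inv_ne_zero hu)
  rw [mul_inv_cancel₀ hu, HahnSeries.order_one] at h2
  omega

lemma add_ne_and_order {u v : LaurentSeries F} (hu : u ≠ 0) (h : u.orderTop < v.orderTop) :
    u + v ≠ 0 ∧ (u + v).order = u.order := by
  have h1 := HahnSeries.orderTop_add_eq_left h
  have hne : u + v ≠ 0 := by
    intro h0
    rw [h0, HahnSeries.orderTop_zero] at h1
    exact (HahnSeries.orderTop_ne_top.mpr hu) h1.symm
  refine ⟨hne, ?_⟩
  have h3 := (HahnSeries.order_eq_orderTop_of_ne_zero hne).trans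
    (h1.trans (HahnSeries.order_eq_orderTop_of_ne_zero hu).symm)
  exact_mod_cast h3

lemma orderTop_lt_orderTop {u v : LaurentSeries F} (hu : u ≠ 0)
    (h : v ≠ 0 → u.order < v.order) : u.orderTop < v.orderTop := by
  by_cases hv : v = 0
  · rw [hv, HahnSeries.orderTop_zero, ← HahnSeries.order_eq_orderTop_of_ne_zero hu]
    exact WithTop.coe_lt_top _
  · rw [← HahnSeries.order_eq_orderTop_of_ne_zero hu, ← HahnSeries.order_eq_orderTop_of_ne_zero hv]
    exact_mod_cast h hv

lemma xx_pow (n : ℕ) : (xx F) ^ n = HahnSeries.single (-(n : ℤ)) 1 := by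
  rw [xx, HahnSeries.single_pow]
  simp

lemma polyEmb_eq_sum (b : Polynomial F) :
    polyEmb F b = ∑ i ∈ Finset.range (b.natDegree + 1),
      HahnSeries.single (-(i : ℤ)) (b.coeff i) := by
  rw [polyEmb]
  simp only [AlgHom.toRingHom_eq_coe, RingHom.coe_coe]
  rw [Polynomial.aeval_eq_sum_range]
  refine Finset.sum_congr rfl fun i _ => ?_
  rw [xx_pow, Algebra.smul_def, HahnSeries.algebraMap_apply', PowerSeries.algebraMap_apply,
    Algebra.algebraMap_self, RingHom.id_apply, HahnSeries.ofPowerSeries_C, HahnSeries.C_apply, HahnSeries.single_mul_single, zero_add,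
    mul_one]

lemma polyEmb_coeff (b : Polynomial F) (i : ℕ) :
    (polyEmb F b).coeff (-(i : ℤ)) = b.coeff i := by
  have : (polyEmb F b).coeff (-(i : ℤ)) = coeffHom (-(i : ℤ)) (polyEmb F b) := rfl
  rw [this, polyEmb_eq_sum, map_sum]
  simp only [coeffHom, AddMonoidHom.coe_mk, ZeroHom.coe_mk, HahnSeries.coeff_single]
  simp_rw [neg_inj, Nat.cast_inj]
  rw [Finset.sum_ite_eq (Finset.range (b.natDegree + 1)) i (fun j => b.coeff j)]
  split
  · rfl
  · next h =>
    rw [Finset.mem_range] at h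
    exact (Polynomial.coeff_eq_zero_of_natDegree_lt (by omega)).symm

lemma polyEmb_coeff_eq_zero (b : Polynomial F) (g : ℤ) (hg : g < -(b.natDegree : ℤ)) :
    (polyEmb F b).coeff g = 0 := by
  have : (polyEmb F b).coeff g = coeffHom g (polyEmb F b) := rfl
  rw [this, polyEmb_eq_sum, map_sum]
  refine Finset.sum_eq_zero fun i hi => ?_
  simp only [coeffHom, AddMonoidHom.coe_mk, ZeroHom.coe_mk]
  apply HahnSeries.coeff_single_of_ne
  simp only [Finset.mem_range] at hi
  omega

lemma polyEmb_ne_zero {b : Polynomial F} (hb : b ≠ 0) : polyEmb F b ≠ 0 := by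
  apply HahnSeries.ne_zero_of_coeff_ne_zero (g := -(b.natDegree : ℤ))
  rw [polyEmb_coeff]
  simpa using Polynomial.leadingCoeff_ne_zero.mpr hb

lemma polyEmb_order {b : Polynomial F} (hb : b ≠ 0) :
    (polyEmb F b).order = -(b.natDegree : ℤ) := by
  have hne := polyEmb_ne_zero hb
  have h1 : (polyEmb F b).order ≤ -(b.natDegree : ℤ) := by
    apply HahnSeries.order_le_of_coeff_ne_zero
    rw [polyEmb_coeff]
    simpa using Polynomial.leadingCoeff_ne_zero.mpr hb
  rcases lt_or_eq_of_le h1 with h | h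
  · exact absurd (polyEmb_coeff_eq_zero b _ h) (HahnSeries.coeff_order_eq_zero.not.mpr hne)
  · exact h


/-! ### shifted convergent sequences -/

def NA (p : ℕ → Polynomial F) : ℕ → Polynomial F
  | 0 => 1
  | n + 1 => convNum p n

def NB (p : ℕ → Polynomial F) : ℕ → Polynomial F
  | 0 => 0
  | n + 1 => convDen p n

lemma NA_rec (p : ℕ → Polynomial F) (n : ℕ) :
    NA p (n + 2) = p (n + 1) * NA p (n + 1) + NA p n := by
  cases n with
  | zero => simp [NA, convNum]
  | succ n => simp [NA, convNum]

lemma NB_rec (p : ℕ → Polynomial F) (n : ℕ) :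
    NB p (n + 2) = p (n + 1) * NB p (n + 1) + NB p n := by
  cases n with
  | zero => simp [NB, convDen]
  | succ n => simp [NB, convDen]

section CFfacts

variable {u : LaurentSeries F} (cf : CFExpansion F u)

lemma diff_ne (i : ℕ) : cf.U i - polyEmb F (cf.p i) ≠ 0 := sub_ne_zero.mpr (cf.ne i)

lemma U_ne (i : ℕ) : cf.U (i + 1) ≠ 0 := by
  rw [cf.step i]; exact inv_ne_zero (diff_ne cf i)

lemma U_order (i : ℕ) : (cf.U (i + 1)).order = -(cf.U i - polyEmb F (cf.p i)).order := by
  rw [cf.step i]; exact order_inv _ (diff_ne cf i)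

lemma U_order_neg (i : ℕ) : (cf.U (i + 1)).order < 0 := by
  rw [U_order]; have := cf.intPart i; omega

lemma polyEmb_p_eq (i : ℕ) :
    polyEmb F (cf.p (i + 1)) ≠ 0 ∧ (polyEmb F (cf.p (i + 1))).order = (cf.U (i + 1)).order := by
  have h : polyEmb F (cf.p (i + 1))
      = cf.U (i + 1) + -(cf.U (i + 1) - polyEmb F (cf.p (i + 1))) := by ring
  rw [h]
  apply add_ne_and_order (U_ne cf i)
  apply orderTop_lt_orderTop (U_ne cf i)
  intro _
  rw [HahnSeries.order_neg]
  have h1 := cf.intPart (i + 1)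
  have h2 := U_order_neg cf i
  omega

lemma p_natDegree (i : ℕ) : ((cf.p (i + 1)).natDegree : ℤ) = -(cf.U (i + 1)).order := by
  have h := polyEmb_p_eq cf i
  have hp : cf.p (i + 1) ≠ 0 := by
    intro h0; apply h.1; rw [h0, map_zero]
  have := polyEmb_order hp
  rw [h.2] at this
  omega

lemma p_natDegree_pos (i : ℕ) : 1 ≤ (cf.p (i + 1)).natDegree := by
  have h1 := p_natDegree cf i
  have h2 := U_order_neg cf i
  omega

/-! ### fundamental identity -/

lemma fund_id (n : ℕ) :
    u * (polyEmb F (NB cf.p (n + 1)) * cf.U (n + 1) + polyEmb F (NB cf.p n))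
      = polyEmb F (NA cf.p (n + 1)) * cf.U (n + 1) + polyEmb F (NA cf.p n) := by
  induction n with
  | zero =>
    have h1 : cf.U 1 = (u - polyEmb F (cf.p 0))⁻¹ := by
      rw [cf.step 0, cf.U_zero]
    have h2 : u - polyEmb F (cf.p 0) ≠ 0 := by
      have h := diff_ne cf 0; rwa [cf.U_zero] at h
    have h3 : (u - polyEmb F (cf.p 0)) * cf.U 1 = 1 := by
      rw [h1]; exact mul_inv_cancel₀ h2
    simp only [NA, NB, convNum, convDen, map_zero, map_one, add_zero, one_mul]
    linear_combination h3
  | succ n ih =>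
    have hU : cf.U (n + 1) = polyEmb F (cf.p (n + 1)) + (cf.U (n + 2))⁻¹ := by
      rw [cf.step (n + 1), inv_inv]
      ring
    have hU2 : cf.U (n + 2) ≠ 0 := U_ne cf (n + 1)
    rw [hU] at ih
    rw [NA_rec, NB_rec, map_add, map_add, map_mul, map_mul]
    linear_combination ih * cf.U (n + 2)
      - (u * polyEmb F (NB cf.p (n + 1)) - polyEmb F (NA cf.p (n + 1))) * mul_inv_cancel₀ hU2

lemma det_id (n : ℕ) :
    NA cf.p (n + 1) * NB cf.p n - NA cf.p n * NB cf.p (n + 1) = (-1) ^ (n + 1) := by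
  induction n with
  | zero => simp [NA, NB, convNum, convDen]
  | succ n ih =>
    rw [NA_rec, NB_rec, pow_succ]
    linear_combination -ih

lemma NB_deg (n : ℕ) :
    NB cf.p (n + 1) ≠ 0 ∧ (NB cf.p n).degree < (NB cf.p (n + 1)).degree := by
  induction n with
  | zero =>
    constructor
    · simp [NB, convDen]
    · simp [NB, convDen]
  | succ n ih =>
    have hp : cf.p (n + 1) ≠ 0 := by
      intro h0
      have := p_natDegree_pos cf n
      rw [h0] at this
      simp at this
    have hb := ih.1
    have hmul : (cf.p (n + 1) * NB cf.p (n + 1)).degree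
        = (((cf.p (n + 1)).natDegree + (NB cf.p (n + 1)).natDegree : ℕ) : WithBot ℕ) := by
      rw [Polynomial.degree_eq_natDegree (mul_ne_zero hp hb), Polynomial.natDegree_mul hp hb]
    have hlt : (NB cf.p (n + 1)).degree < (cf.p (n + 1) * NB cf.p (n + 1)).degree := by
      rw [hmul, Polynomial.degree_eq_natDegree hb]
      exact_mod_cast by have := p_natDegree_pos cf n; omega
    have hlt2 : (NB cf.p n).degree < (cf.p (n + 1) * NB cf.p (n + 1)).degree :=
      lt_trans ih.2 hlt
    have hdeg := Polynomial.degree_add_eq_left_of_degree_lt hlt2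
    rw [← NB_rec] at hdeg
    constructor
    · intro h0
      rw [h0, Polynomial.degree_zero, hmul] at hdeg
      exact (WithBot.bot_ne_coe) hdeg
    · rw [hdeg]
      exact hlt

lemma NB_ne (n : ℕ) : NB cf.p (n + 1) ≠ 0 := (NB_deg cf n).1

lemma beta_zero : (NB cf.p 1).natDegree = 0 := by
  simp [NB, convDen]

lemma beta_succ (n : ℕ) : (NB cf.p (n + 2)).natDegree
    = (NB cf.p (n + 1)).natDegree + (cf.p (n + 1)).natDegree := by
  have hp : cf.p (n + 1) ≠ 0 := by
    intro h0
    have := p_natDegree_pos cf n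
    rw [h0] at this
    simp at this
  have hb := NB_ne cf n
  have hlt : (NB cf.p (n + 1)).degree < (cf.p (n + 1) * NB cf.p (n + 1)).degree := by
    rw [Polynomial.degree_eq_natDegree (mul_ne_zero hp hb), Polynomial.degree_eq_natDegree hb,
      Polynomial.natDegree_mul hp hb]
    exact_mod_cast by have := p_natDegree_pos cf n; omega
  have hlt2 : (NB cf.p n).degree < (cf.p (n + 1) * NB cf.p (n + 1)).degree :=
    lt_trans (NB_deg cf n).2 hlt
  have hdeg := Polynomial.degree_add_eq_left_of_degree_lt hlt2
  rw [← NB_rec] at hdeg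
  rw [Polynomial.natDegree_eq_of_degree_eq hdeg, Polynomial.natDegree_mul hp hb]
  ring

lemma NBn_deg_lt (n : ℕ) (h : NB cf.p n ≠ 0) :
    (NB cf.p n).natDegree < (NB cf.p (n + 1)).natDegree :=
  Polynomial.natDegree_lt_natDegree h (NB_deg cf n).2

lemma exists_n (m : ℕ) :
    ∃ n, (NB cf.p (n + 1)).natDegree ≤ m ∧ m < (NB cf.p (n + 2)).natDegree := by
  induction m with
  | zero =>
    refine ⟨0, by rw [beta_zero], ?_⟩
    rw [beta_succ, beta_zero]
    have := p_natDegree_pos cf 0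
    omega
  | succ m ih =>
    obtain ⟨n, h1, h2⟩ := ih
    by_cases h : m + 1 < (NB cf.p (n + 2)).natDegree
    · exact ⟨n, by omega, h⟩
    · have e : n + 1 + 1 = n + 2 := rfl
      refine ⟨n + 1, ?_, ?_⟩
      · rw [e]; omega
      · rw [show n + 1 + 2 = (n + 1) + 2 from rfl, beta_succ, e]
        have hp := p_natDegree_pos cf (n + 1)
        rw [e] at hp
        omega

/-! ### the error term -/

lemma W_spec (n : ℕ) :
    polyEmb F (NB cf.p (n + 1)) * cf.U (n + 1) + polyEmb F (NB cf.p n) ≠ 0 ∧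
    (polyEmb F (NB cf.p (n + 1)) * cf.U (n + 1) + polyEmb F (NB cf.p n)).order
      = -((NB cf.p (n + 1)).natDegree : ℤ) + (cf.U (n + 1)).order := by
  have hb1 := NB_ne cf n
  have hbE := polyEmb_ne_zero hb1
  have ht : polyEmb F (NB cf.p (n + 1)) * cf.U (n + 1) ≠ 0 :=
    mul_ne_zero hbE (U_ne cf n)
  have hto : (polyEmb F (NB cf.p (n + 1)) * cf.U (n + 1)).order
      = -((NB cf.p (n + 1)).natDegree : ℤ) + (cf.U (n + 1)).order := by
    rw [HahnSeries.order_mul hbE (U_ne cf n), polyEmb_order hb1]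
  have hcmp : (polyEmb F (NB cf.p (n + 1)) * cf.U (n + 1)).orderTop
      < (polyEmb F (NB cf.p n)).orderTop := by
    apply orderTop_lt_orderTop ht
    intro hv
    have hbn : NB cf.p n ≠ 0 := by
      intro h0; apply hv; rw [h0, map_zero]
    rw [hto, polyEmb_order hbn]
    have h1 := NBn_deg_lt cf n hbn
    have h2 := U_order_neg cf n
    omega
  obtain ⟨hne, hord⟩ := add_ne_and_order ht hcmp
  exact ⟨hne, hord.trans hto⟩

lemma R_spec (n : ℕ) :
    (u * polyEmb F (NB cf.p (n + 1)) - polyEmb F (NA cf.p (n + 1)))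
      * (polyEmb F (NB cf.p (n + 1)) * cf.U (n + 1) + polyEmb F (NB cf.p n))
      = polyEmb F ((-1) ^ n) := by
  have hdet := det_id cf n
  have hdet' : polyEmb F (NA cf.p (n + 1)) * polyEmb F (NB cf.p n)
      - polyEmb F (NA cf.p n) * polyEmb F (NB cf.p (n + 1))
      = -polyEmb F ((-1) ^ n) := by
    have h := congrArg (polyEmb F) hdet
    rw [map_sub, map_mul, map_mul] at h
    rw [h, pow_succ, map_mul, map_neg, map_one]
    ring
  linear_combination polyEmb F (NB cf.p (n + 1)) * fund_id cf n - hdet'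

lemma R_order (n : ℕ) :
    u * polyEmb F (NB cf.p (n + 1)) - polyEmb F (NA cf.p (n + 1)) ≠ 0 ∧
    (u * polyEmb F (NB cf.p (n + 1)) - polyEmb F (NA cf.p (n + 1))).order
      = ((NB cf.p (n + 1)).natDegree : ℤ) + ((cf.p (n + 1)).natDegree : ℤ) := by
  have hW := W_spec cf n
  have hR := R_spec cf n
  have hCne : ((-1 : Polynomial F) ^ n) ≠ 0 := by
    apply pow_ne_zero; exact neg_ne_zero.mpr one_ne_zero
  have hCdeg : ((-1 : Polynomial F) ^ n).natDegree = 0 := by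
    rw [Polynomial.natDegree_pow, Polynomial.natDegree_neg, Polynomial.natDegree_one, mul_zero]
  have hCE : polyEmb F ((-1 : Polynomial F) ^ n) ≠ 0 := polyEmb_ne_zero hCne
  have hCo : (polyEmb F ((-1 : Polynomial F) ^ n)).order = 0 := by
    rw [polyEmb_order hCne, hCdeg]; rfl
  have hRne : u * polyEmb F (NB cf.p (n + 1)) - polyEmb F (NA cf.p (n + 1)) ≠ 0 := by
    intro h0
    rw [h0, zero_mul] at hR
    exact hCE hR.symm
  refine ⟨hRne, ?_⟩
  have := HahnSeries.order_mul hRne hW.1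
  rw [hR, hCo] at this
  have hd := p_natDegree cf n
  have hWo := hW.2
  omega


lemma NANB_coprime (n : ℕ) :
    IsCoprime (NA cf.p (n + 1)) (NB cf.p (n + 1)) := by
  have hsq : ((-1 : Polynomial F) ^ (n + 1)) * ((-1 : Polynomial F) ^ (n + 1)) = 1 := by
    rw [← pow_add, show (n + 1) + (n + 1) = 2 * (n + 1) by ring, pow_mul]
    norm_num
  exact ⟨(-1) ^ (n + 1) * NB cf.p n, -((-1) ^ (n + 1) * NA cf.p n), by
    linear_combination ((-1 : Polynomial F) ^ (n + 1)) * det_id cf n + hsq⟩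

end CFfacts

end Helpers

/-- if coprime `a, b` satisfy `|u - a/b| = |x|^(-k)·|b|^(-2)` with `k` a
positive integer, then `a/b` is the `n`-th convergent of `u` for some `n`, and
`k = deg pₙ₊₁`. -/
theorem statement4 (F : Type*) [Field F] (q : ℝ) (hq : 1 < q)
    (u : LaurentSeries F) (hu : IsIrrational F u) (cf : CFExpansion F u)
    (a b : Polynomial F) (hab : IsCoprime a b) (hb : b ≠ 0)
    (k : ℕ) (hk : 0 < k)
    (hacc : absVal F q (u - polyEmb F a / polyEmb F b)
      = q ^ (-(k : ℤ)) * (absVal F q (polyEmb F b)) ^ (-2 : ℤ)) :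
    ∃ n : ℕ, polyEmb F a / polyEmb F b = conv F cf.p n ∧ k = (cf.p (n + 1)).natDegree := by
  have hq0 : (0 : ℝ) < q := lt_trans one_pos hq
  have hq1 : q ≠ 1 := ne_of_gt hq
  set m : ℕ := b.natDegree with hm
  have hbE : polyEmb F b ≠ 0 := polyEmb_ne_zero hb
  have hbord : (polyEmb F b).order = -(m : ℤ) := polyEmb_order hb
  have habs : absVal F q (polyEmb F b) = q ^ (m : ℤ) := by
    rw [absVal, if_neg hbE, hbord]; norm_num
  have hdne : u - polyEmb F a / polyEmb F b ≠ 0 := by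
    intro h0
    rw [h0, absVal, if_pos rfl, habs] at hacc
    have hpos : (0 : ℝ) < q ^ (-(k : ℤ)) * (q ^ (m : ℤ)) ^ (-2 : ℤ) := by positivity
    rw [← hacc] at hpos
    exact lt_irrefl 0 hpos
  have hordd : (u - polyEmb F a / polyEmb F b).order = (k : ℤ) + 2 * m := by
    rw [absVal, if_neg hdne, habs] at hacc
    have h1 : q ^ (-(u - polyEmb F a / polyEmb F b).order)
        = q ^ (-(k : ℤ) + (m : ℤ) * (-2)) := by
      rw [hacc, zpow_add₀ (ne_of_gt hq0), zpow_mul]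
    have h2 := zpow_right_injective₀ hq0 hq1 h1
    omega
  have hfrac : polyEmb F a / polyEmb F b * polyEmb F b = polyEmb F a :=
    div_mul_cancel₀ _ hbE
  have hRab : u * polyEmb F b - polyEmb F a
      = (u - polyEmb F a / polyEmb F b) * polyEmb F b := by
    rw [sub_mul, hfrac]
  have hRabne : u * polyEmb F b - polyEmb F a ≠ 0 := by
    rw [hRab]; exact mul_ne_zero hdne hbE
  have hRabord : (u * polyEmb F b - polyEmb F a).order = (k : ℤ) + m := by
    rw [hRab, HahnSeries.order_mul hdne hbE, hordd, hbord]; ring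
  obtain ⟨n, hn1, hn2⟩ := exists_n cf m
  rw [beta_succ] at hn2
  have hB1ne : NB cf.p (n + 1) ≠ 0 := NB_ne cf n
  have hB1E : polyEmb F (NB cf.p (n + 1)) ≠ 0 := polyEmb_ne_zero hB1ne
  obtain ⟨hRne, hRord⟩ := R_order cf n
  have he : a * NB cf.p (n + 1) - b * NA cf.p (n + 1) = 0 := by
    by_contra he0
    have h1 : (polyEmb F (a * NB cf.p (n + 1) - b * NA cf.p (n + 1))).order ≤ 0 := by
      rw [polyEmb_order he0]; omega
    have hsplit : polyEmb F (a * NB cf.p (n + 1) - b * NA cf.p (n + 1))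
        = polyEmb F b * (u * polyEmb F (NB cf.p (n + 1)) - polyEmb F (NA cf.p (n + 1)))
          + -(polyEmb F (NB cf.p (n + 1))) * (u * polyEmb F b - polyEmb F a) := by
      rw [map_sub, map_mul, map_mul]; ring
    have ht1ne : polyEmb F b
        * (u * polyEmb F (NB cf.p (n + 1)) - polyEmb F (NA cf.p (n + 1))) ≠ 0 :=
      mul_ne_zero hbE hRne
    have ht1 : (polyEmb F b
        * (u * polyEmb F (NB cf.p (n + 1)) - polyEmb F (NA cf.p (n + 1)))).order
        = -(m : ℤ) + (((NB cf.p (n + 1)).natDegree : ℤ) + ((cf.p (n + 1)).natDegree : ℤ)) := by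
      rw [HahnSeries.order_mul hbE hRne, hbord, hRord]
    have ht2ne : -(polyEmb F (NB cf.p (n + 1))) * (u * polyEmb F b - polyEmb F a) ≠ 0 :=
      mul_ne_zero (neg_ne_zero.mpr hB1E) hRabne
    have ht2 : (-(polyEmb F (NB cf.p (n + 1))) * (u * polyEmb F b - polyEmb F a)).order
        = -((NB cf.p (n + 1)).natDegree : ℤ) + ((k : ℤ) + m) := by
      rw [HahnSeries.order_mul (neg_ne_zero.mpr hB1E) hRabne, HahnSeries.order_neg,
        polyEmb_order hB1ne, hRabord]
    have hne0 : polyEmb F (a * NB cf.p (n + 1) - b * NA cf.p (n + 1)) ≠ 0 :=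
      polyEmb_ne_zero he0
    rw [hsplit] at hne0 h1
    have hmin := HahnSeries.min_order_le_order_add hne0
    rw [ht1, ht2] at hmin
    have hk' : (1 : ℤ) ≤ k := by exact_mod_cast hk
    omega
  have heq : a * NB cf.p (n + 1) = b * NA cf.p (n + 1) := sub_eq_zero.mp he
  have hbdvd : b ∣ NB cf.p (n + 1) :=
    (hab.symm).dvd_of_dvd_mul_left ⟨NA cf.p (n + 1), heq⟩
  have hB1dvd : NB cf.p (n + 1) ∣ b :=
    ((NANB_coprime cf n).symm).dvd_of_dvd_mul_left ⟨a, by linear_combination -heq⟩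
  obtain ⟨ε, hε⟩ := associated_of_dvd_dvd hbdvd hB1dvd
  have hcu : IsUnit (ε : Polynomial F) := ε.isUnit
  have hcdeg : (ε : Polynomial F).natDegree = 0 := Polynomial.natDegree_eq_zero_of_isUnit hcu
  have hcne : (ε : Polynomial F) ≠ 0 := hcu.ne_zero
  have hcE : polyEmb F (ε : Polynomial F) ≠ 0 := polyEmb_ne_zero hcne
  have hmb : (NB cf.p (n + 1)).natDegree = m := by
    rw [← hε, Polynomial.natDegree_mul hb hcne, hcdeg]
    omega
  have hA : NA cf.p (n + 1) = a * (ε : Polynomial F) := by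
    apply mul_left_cancel₀ hb
    rw [← heq, ← hε]; ring
  have hconv : polyEmb F a / polyEmb F b = conv F cf.p n := by
    rw [conv, show convNum cf.p n = NA cf.p (n + 1) from rfl,
      show convDen cf.p n = NB cf.p (n + 1) from rfl, hA, ← hε, map_mul, map_mul,
      mul_div_mul_right _ _ hcE]
  have hR2 : u * polyEmb F (NB cf.p (n + 1)) - polyEmb F (NA cf.p (n + 1))
      = (u * polyEmb F b - polyEmb F a) * polyEmb F (ε : Polynomial F) := by
    rw [hA, ← hε, map_mul, map_mul]; ring
  have hord2 : ((NB cf.p (n + 1)).natDegree : ℤ) + ((cf.p (n + 1)).natDegree : ℤ)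
      = ((k : ℤ) + m) + 0 := by
    rw [← hRord, hR2, HahnSeries.order_mul hRabne hcE, hRabord, polyEmb_order hcne, hcdeg]
    norm_num
  refine ⟨n, hconv, ?_⟩
  omega


end PaperCF
end
end

section
/- Let F be a field of characteristic 2 and let u ∈ F((x⁻¹)) be irrational with partial quotients p₀, p₁, … and complete quotients u₀, u₁, …. Suppose j ≥ 1 (so that deg pⱼ ≥ 1 and deg pⱼ₊₁ ≥ 1) and Q, R, S, T ∈ F[x] satisfy S·uⱼ² + T ≠ 0, uᵢ = (Q·uⱼ² + R)/(S·uⱼ² + T), and deg(S·uⱼ²) > deg T. Set Q' = Q·pⱼ² + R, R' = Q, S' = S·pⱼ² + T, T' = S. Then uᵢ = (Q'·uⱼ₊₁² + R')/(S'·uⱼ₊₁² + T'), deg S' = deg S + 2·deg pⱼ, and deg(S'·uⱼ₊₁²) > deg T'. -/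
open Polynomial
open scoped Classical

noncomputable section

namespace PaperCF

theorem polyEmb_apply {F : Type*} [Field F] (P : Polynomial F) :
    polyEmb F P = ∑ n ∈ P.support, HahnSeries.single (-(n : ℤ)) (P.coeff n) := by
  conv_lhs => rw [P.as_sum_support]
  rw [polyEmb, AlgHom.toRingHom_eq_coe, RingHom.coe_coe, map_sum]
  refine Finset.sum_congr rfl fun n _ => ?_
  rw [Polynomial.aeval_monomial, xx, HahnSeries.single_pow]
  rw [show (algebraMap F (LaurentSeries F)) (P.coeff n) = HahnSeries.single (0 : ℤ) (P.coeff n)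
    from by rw [HahnSeries.algebraMap_apply', PowerSeries.algebraMap_apply]; simp [HahnSeries.ofPowerSeries_C, HahnSeries.C_apply], HahnSeries.single_mul_single]
  simp

theorem polyEmb_coeff_s17 {F : Type*} [Field F] (P : Polynomial F) (m : ℕ) :
    (polyEmb F P).coeff (-(m : ℤ)) = P.coeff m := by
  rw [polyEmb_apply, ← HahnSeries.coeff.addMonoidHom_apply, map_sum]
  simp only [HahnSeries.coeff.addMonoidHom_apply, HahnSeries.coeff_single, neg_inj,
    Nat.cast_inj]
  rw [Finset.sum_ite_eq P.support m (fun n => P.coeff n)]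
  by_cases h : m ∈ P.support
  · simp [h]
  · simp [h, Polynomial.notMem_support_iff.mp h]

theorem polyEmb_ne_zero_s17 {F : Type*} [Field F] {P : Polynomial F} (hP : P ≠ 0) :
    polyEmb F P ≠ 0 := by
  intro h
  have := polyEmb_coeff_s17 P P.natDegree
  rw [h, HahnSeries.coeff_zero] at this
  exact Polynomial.leadingCoeff_ne_zero.mpr hP this.symm

theorem order_polyEmb {F : Type*} [Field F] {P : Polynomial F} (hP : P ≠ 0) :
    (polyEmb F P).order = -(P.natDegree : ℤ) := by
  have hle : (polyEmb F P).order ≤ -(P.natDegree : ℤ) := by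
    apply HahnSeries.order_le_of_coeff_ne_zero
    rw [polyEmb_coeff_s17]
    exact Polynomial.leadingCoeff_ne_zero.mpr hP
  rcases lt_or_eq_of_le hle with h | h
  · exfalso
    have hne := HahnSeries.coeff_order_eq_zero.not.mpr (polyEmb_ne_zero_s17 hP)
    set g := (polyEmb F P).order with hg
    have hg0 : g < 0 := lt_of_lt_of_le h (by omega)
    have : g = -(((-g).toNat : ℕ) : ℤ) := by omega
    rw [this, polyEmb_coeff_s17] at hne
    apply hne
    apply Polynomial.coeff_eq_zero_of_natDegree_lt
    omega
  · exact h

theorem U_spec {F : Type*} [Field F] {u : LaurentSeries F} (cf : CFExpansion F u) {i : ℕ}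
    (hi : 1 ≤ i) :
    cf.U i ≠ 0 ∧ 1 ≤ (cf.p i).natDegree ∧ (cf.U i).order = -((cf.p i).natDegree : ℤ) := by
  obtain ⟨k, rfl⟩ : ∃ k, i = k + 1 := ⟨i - 1, by omega⟩
  have hε : cf.U k - polyEmb F (cf.p k) ≠ 0 := sub_ne_zero.mpr (cf.ne k)
  have hwval : cf.U (k+1) = (cf.U k - polyEmb F (cf.p k))⁻¹ := cf.step k
  have hw0 : cf.U (k+1) ≠ 0 := by rw [hwval]; exact inv_ne_zero hε
  have hmul : cf.U (k+1) * (cf.U k - polyEmb F (cf.p k)) = 1 := by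
    rw [hwval]; exact inv_mul_cancel₀ hε
  have hordw : (cf.U (k+1)).order = -(cf.U k - polyEmb F (cf.p k)).order := by
    have h := HahnSeries.order_mul hw0 hε
    rw [hmul, HahnSeries.order_one] at h
    omega
  have hordneg : (cf.U (k+1)).order < 0 := by
    have := cf.intPart k; omega
  have hε' : cf.U (k+1) - polyEmb F (cf.p (k+1)) ≠ 0 := sub_ne_zero.mpr (cf.ne (k+1))
  have hord' := cf.intPart (k+1)
  have hp0 : cf.p (k+1) ≠ 0 := by
    intro h
    rw [h, map_zero, sub_zero] at hord'
    omega
  have h1 : (polyEmb F (cf.p (k+1))).orderTop = (cf.U (k+1)).orderTop := by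
    have hsub : polyEmb F (cf.p (k+1)) =
        cf.U (k+1) + -(cf.U (k+1) - polyEmb F (cf.p (k+1))) := by ring
    rw [hsub]
    apply HahnSeries.orderTop_add_eq_left
    rw [HahnSeries.orderTop_neg, ← HahnSeries.order_eq_orderTop_of_ne_zero hw0,
      ← HahnSeries.order_eq_orderTop_of_ne_zero hε']
    exact_mod_cast lt_trans hordneg (cf.intPart (k+1))
  have h2 : (polyEmb F (cf.p (k+1))).order = (cf.U (k+1)).order := by
    have ha := HahnSeries.order_eq_orderTop_of_ne_zero (x := polyEmb F (cf.p (k+1))) (polyEmb_ne_zero_s17 hp0)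
    have hb := HahnSeries.order_eq_orderTop_of_ne_zero hw0
    exact_mod_cast ha.trans (h1.trans hb.symm)
  have h3 := order_polyEmb hp0
  refine ⟨hw0, ?_, ?_⟩
  · omega
  · omega


/-- a step of type (3) with `j ≥ 1` and `deg(S·uⱼ²) > deg T` preserves
that inequality and increases `deg S` by `2·deg pⱼ`. -/
theorem statement17 (F : Type*) [Field F] [CharP F 2] (u : LaurentSeries F)
    (hu : IsIrrational F u) (cf : CFExpansion F u)
    (i j : ℕ) (hj : 1 ≤ j) (Q R S T : Polynomial F)
    (hden : polyEmb F S * (cf.U j) ^ 2 + polyEmb F T ≠ 0)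
    (heq : cf.U i = (polyEmb F Q * (cf.U j) ^ 2 + polyEmb F R) /
      (polyEmb F S * (cf.U j) ^ 2 + polyEmb F T))
    (hST : degB F (polyEmb F T) < degB F (polyEmb F S * (cf.U j) ^ 2)) :
    cf.U i = (polyEmb F (Q * (cf.p j) ^ 2 + R) * (cf.U (j + 1)) ^ 2 + polyEmb F Q) /
      (polyEmb F (S * (cf.p j) ^ 2 + T) * (cf.U (j + 1)) ^ 2 + polyEmb F S) ∧
    (S * (cf.p j) ^ 2 + T).natDegree = S.natDegree + 2 * (cf.p j).natDegree ∧
    degB F (polyEmb F S)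
      < degB F (polyEmb F (S * (cf.p j) ^ 2 + T) * (cf.U (j + 1)) ^ 2) := by
  obtain ⟨hUj, hpj, hordj⟩ := U_spec cf hj
  obtain ⟨hv0, hpj1, hordj1⟩ := U_spec cf (Nat.le_add_left 1 j)
  set v := cf.U (j+1) with hvdef
  have hε : cf.U j - polyEmb F (cf.p j) ≠ 0 := sub_ne_zero.mpr (cf.ne j)
  have hvinv : v⁻¹ = cf.U j - polyEmb F (cf.p j) := by rw [hvdef, cf.step j, inv_inv]
  have hUeq : cf.U j = polyEmb F (cf.p j) + v⁻¹ := by rw [hvinv]; ring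
  haveI : CharP (LaurentSeries F) 2 :=
    charP_of_injective_algebraMap (algebraMap F (LaurentSeries F)).injective 2
  have hsq : (cf.U j)^2 = (polyEmb F (cf.p j))^2 + (v⁻¹)^2 := by
    rw [hUeq, CharTwo.add_sq]
  have hv2 : v^2 ≠ 0 := pow_ne_zero 2 hv0
  have key : ∀ A B : Polynomial F,
      polyEmb F A * (cf.U j)^2 + polyEmb F B
        = (polyEmb F (A * (cf.p j)^2 + B) * v^2 + polyEmb F A) * (v^2)⁻¹ := by
    intro A B
    rw [hsq, map_add, map_mul, map_pow]
    field_simp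
    ring
  have hS0 : S ≠ 0 := by
    intro h
    rw [h, map_zero, zero_mul] at hST
    simp [degB] at hST
  have hpj0 : cf.p j ≠ 0 := fun h => by simp [h] at hpj
  have hndSp : (S * cf.p j ^ 2).natDegree = S.natDegree + 2 * (cf.p j).natDegree := by
    rw [Polynomial.natDegree_mul hS0 (pow_ne_zero _ hpj0), Polynomial.natDegree_pow]
  have hmulS : polyEmb F S * (cf.U j)^2 ≠ 0 :=
    mul_ne_zero (polyEmb_ne_zero_s17 hS0) (pow_ne_zero _ hUj)
  have hordmul : (polyEmb F S * (cf.U j)^2).order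
      = -(S.natDegree : ℤ) - 2 * ((cf.p j).natDegree : ℤ) := by
    rw [HahnSeries.order_mul (polyEmb_ne_zero_s17 hS0) (pow_ne_zero _ hUj),
      HahnSeries.order_pow, order_polyEmb hS0, hordj]
    push_cast
    ring
  have hTlt : T.natDegree < S.natDegree + 2 * (cf.p j).natDegree := by
    by_cases hT : T = 0
    · simp only [hT, Polynomial.natDegree_zero]
      omega
    · rw [degB, degB, if_neg (polyEmb_ne_zero_s17 hT), if_neg hmulS, hordmul,
        order_polyEmb hT] at hST
      have := WithBot.coe_lt_coe.mp hST
      omega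
  have hS'nd : (S * cf.p j ^ 2 + T).natDegree = S.natDegree + 2 * (cf.p j).natDegree := by
    rw [Polynomial.natDegree_add_eq_left_of_natDegree_lt (by omega), hndSp]
  have hS' : S * cf.p j ^ 2 + T ≠ 0 := by
    intro h
    rw [h, Polynomial.natDegree_zero] at hS'nd
    omega
  refine ⟨?_, hS'nd, ?_⟩
  · rw [heq, key Q R, key S T, mul_div_mul_right _ _ (inv_ne_zero hv2)]
  · have hmul' : polyEmb F (S * cf.p j ^ 2 + T) * v^2 ≠ 0 :=
      mul_ne_zero (polyEmb_ne_zero_s17 hS') hv2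
    rw [degB, degB, if_neg (polyEmb_ne_zero_s17 hS0), if_neg hmul',
      HahnSeries.order_mul (polyEmb_ne_zero_s17 hS') hv2, HahnSeries.order_pow,
      order_polyEmb hS', order_polyEmb hS0, hordj1, hS'nd]
    rw [WithBot.coe_lt_coe]
    simp only [nsmul_eq_mul]
    push_cast
    omega


end PaperCF
end
end
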